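/- For every set Γ of L-formulas and every L-formula φ: Γ ⊩^{inm} φ if and only if Γ ⊨ φ; that is, semantic consequence over intuitionistic neighbourhood models coincides with semantic consequence over IFOM-structures. -/

import Mathlib

/-
Common formalisation of the syntax and semantics of the intuitionistic
monotone modal logic IM, its generalised Hilbert calculi, intuitionistic
neighbourhood models, IFOM-structures, and related constructions.
-/

namespace IMPaper

/-- Formulas of the monotone modal language L. -/
inductive Formula : Type
  | prop : ℕ → Formula
  | bot  : Formula
  | and  : Formula → Formula → Formula
  | or   : Formula → Formula → Formula
  | imp  : Formula → Formula → Formula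
  | box  : Formula → Formula
  | dia  : Formula → Formula
deriving DecidableEq

/-- Negation: ¬φ abbreviates φ → ⊥. -/
def Formula.neg (φ : Formula) : Formula := φ.imp .bot

/-- Top: ⊤ abbreviates ⊥ → ⊥. -/
def Formula.top : Formula := Formula.bot.imp .bot

/-- Substitution of formulas for proposition letters. -/
def Formula.subst (σ : ℕ → Formula) : Formula → Formula
  | .prop i   => σ i
  | .bot      => .bot
  | .and φ ψ  => .and (φ.subst σ) (ψ.subst σ)
  | .or φ ψ   => .or (φ.subst σ) (ψ.subst σ)
  | .imp φ ψ  => .imp (φ.subst σ) (ψ.subst σ)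
  | .box φ    => .box (φ.subst σ)
  | .dia φ    => .dia (φ.subst σ)

private def pp0 : Formula := .prop 0
private def pp1 : Formula := .prop 1
private def pp2 : Formula := .prop 2

/-- A standard axiomatisation of intuitionistic propositional logic. -/
def IpcAx : Set Formula :=
  { Formula.imp pp0 (.imp pp1 pp0),
    Formula.imp (.imp pp0 (.imp pp1 pp2)) (.imp (.imp pp0 pp1) (.imp pp0 pp2)),
    Formula.imp (.and pp0 pp1) pp0,
    Formula.imp (.and pp0 pp1) pp1,
    Formula.imp pp0 (.imp pp1 (.and pp0 pp1)),
    Formula.imp pp0 (.or pp0 pp1),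
    Formula.imp pp1 (.or pp0 pp1),
    Formula.imp (.imp pp0 pp2) (.imp (.imp pp1 pp2) (.imp (.or pp0 pp1) pp2)),
    Formula.imp .bot pp0 }

/-- All substitution instances of a set of formulas. -/
def Instances (Ax : Set Formula) : Set Formula :=
  {φ | ∃ ψ ∈ Ax, ∃ σ, φ = ψ.subst σ}

/-- 𝒜x: all substitution instances of Ax together with all substitution
instances of the axioms of intuitionistic propositional logic. -/
def ScrAx (Ax : Set Formula) : Set Formula := Instances Ax ∪ Instances IpcAx

/-- The generalised Hilbert calculus GHC(Ax). -/
inductive GHC (Ax : Set Formula) : Set Formula → Formula → Prop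
  | el {Γ : Set Formula} {φ : Formula} : φ ∈ Γ → GHC Ax Γ φ
  | ax {Γ : Set Formula} {φ : Formula} : φ ∈ ScrAx Ax → GHC Ax Γ φ
  | mp {Γ : Set Formula} {φ ψ : Formula} :
      GHC Ax Γ φ → GHC Ax Γ (φ.imp ψ) → GHC Ax Γ ψ
  | monBox {Γ : Set Formula} {φ ψ : Formula} :
      GHC Ax ∅ (φ.imp ψ) → GHC Ax Γ ((Formula.box φ).imp (Formula.box ψ))
  | monDia {Γ : Set Formula} {φ ψ : Formula} :
      GHC Ax ∅ (φ.imp ψ) → GHC Ax Γ ((Formula.dia φ).imp (Formula.dia ψ))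

/-- The axioms (neg_a) and (I_◇) of the calculus IMCalc. -/
def IMAx : Set Formula :=
  { Formula.imp ((Formula.box pp0).and (Formula.dia pp0.neg)) .bot,
    Formula.imp ((Formula.box Formula.top).imp (Formula.dia pp0)) (Formula.dia pp0) }

/-- Derivability in the calculus IMCalc = GHC({(□p ∧ ◇¬p) → ⊥, (□⊤ → ◇p) → ◇p}). -/
def IMC : Set Formula → Formula → Prop := GHC IMAx

/-- An intuitionistic neighbourhood: a partial function W ⇀ 𝒫(W), encoded as a
domain together with a (total) value function whose values matter on the domain. -/
structure Nbhd (W : Type) where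
  dom : Set W
  val : W → Set W

/-- The data of an intuitionistic neighbourhood model. -/
structure INStruct (W : Type) where
  le : W → W → Prop
  N : Set (Nbhd W)
  V : ℕ → Set W

variable {W W' : Type}

/-- A set is upward closed w.r.t. the order of the structure. -/
def INStruct.Up (M : INStruct W) (s : Set W) : Prop :=
  ∀ ⦃w v : W⦄, M.le w v → w ∈ s → v ∈ s

/-- `M` is an intuitionistic neighbourhood model: the order is a partial order,
the domain of every neighbourhood is upward closed, and the valuation assigns
upward closed sets to proposition letters. -/
def INStruct.IsModel (M : INStruct W) : Prop :=
  IsPartialOrder W M.le ∧ (∀ a ∈ M.N, M.Up a.dom) ∧ ∀ i, M.Up (M.V i)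

/-- Truth of a formula at a world of an intuitionistic neighbourhood model. -/
def INStruct.sat (M : INStruct W) : Formula → W → Prop
  | .prop i, w  => w ∈ M.V i
  | .bot, _     => False
  | .and φ ψ, w => M.sat φ w ∧ M.sat ψ w
  | .or φ ψ, w  => M.sat φ w ∨ M.sat ψ w
  | .imp φ ψ, w => ∀ v, M.le w v → M.sat φ v → M.sat ψ v
  | .box φ, w   => ∃ a ∈ M.N, w ∈ a.dom ∧
      ∀ w', M.le w w' → ∀ v ∈ a.val w', M.sat φ v
  | .dia φ, w   => ∀ w', M.le w w' → ∀ a ∈ M.N, w' ∈ a.dom →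
      ∃ v ∈ a.val w', M.sat φ v

/-- Semantic consequence over the class of all intuitionistic neighbourhood models. -/
def INConseq (Γ : Set Formula) (φ : Formula) : Prop :=
  ∀ (W : Type) (M : INStruct W), M.IsModel →
    ∀ w : W, (∀ ψ ∈ Γ, M.sat ψ w) → M.sat φ w

/-- A coherent intuitionistic neighbourhood: conditions (N1) and (N2). -/
def INStruct.CoherentNbhd (M : INStruct W) (a : Nbhd W) : Prop :=
  (∀ ⦃w w' : W⦄, M.le w w' → w ∈ a.dom → ∀ v ∈ a.val w, ∃ v' ∈ a.val w', M.le v v') ∧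
  (∀ ⦃w : W⦄, w ∈ a.dom → ∀ v ∈ a.val w, ∀ v', M.le v v' →
      ∃ w', M.le w w' ∧ v' ∈ a.val w')

/-- A model is coherent if all its intuitionistic neighbourhoods are coherent. -/
def INStruct.Coherent (M : INStruct W) : Prop := ∀ a ∈ M.N, M.CoherentNbhd a

/-- Semantic consequence over the class of coherent intuitionistic neighbourhood models. -/
def CohConseq (Γ : Set Formula) (φ : Formula) : Prop :=
  ∀ (W : Type) (M : INStruct W), M.IsModel → M.Coherent →
    ∀ w : W, (∀ ψ ∈ Γ, M.sat ψ w) → M.sat φ w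

/-- The relation R: w R v iff v ∈ a(w) for some neighbourhood a of w. -/
def INStruct.R (M : INStruct W) (w v : W) : Prop :=
  ∃ a ∈ M.N, w ∈ a.dom ∧ v ∈ a.val w

/-- R~-Cartesian: w ≤~ v R~ w implies w = v (with ~ the equivalence closures). -/
def INStruct.RCartesian (M : INStruct W) : Prop :=
  ∀ w v, Relation.EqvGen M.le w v → Relation.EqvGen M.R v w → w = v

/-- N-Cartesian: w R~ v and w, v ∈ dom(a) imply a(w) = a(v). -/
def INStruct.NCartesian (M : INStruct W) : Prop :=
  ∀ a ∈ M.N, ∀ w v, Relation.EqvGen M.R w v → w ∈ a.dom → v ∈ a.dom →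
    a.val w = a.val v

/-- Cartesian: both R~-Cartesian and N-Cartesian. -/
def INStruct.Cartesian (M : INStruct W) : Prop := M.RCartesian ∧ M.NCartesian

/-- Isomorphism of intuitionistic neighbourhood structures. -/
def Isomorphic (M : INStruct W) (M' : INStruct W') : Prop :=
  ∃ (α : W → W') (ν : Nbhd W → Nbhd W'),
    Function.Bijective α ∧ Set.BijOn ν M.N M'.N ∧
    (∀ w v, M.le w v ↔ M'.le (α w) (α v)) ∧
    (∀ a ∈ M.N, ∀ w, w ∈ a.dom ↔ α w ∈ (ν a).dom) ∧
    (∀ a ∈ M.N, ∀ u ∈ a.dom, ∀ w, w ∈ a.val u ↔ α w ∈ (ν a).val (α u)) ∧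
    (∀ i w, w ∈ M.V i ↔ α w ∈ M'.V i)

end IMPaper
namespace IMPaper

variable {W S A : Type}

/-- The data of an IFOM-structure (two-sorted intuitionistic first-order structure). -/
structure IFOMStruct (W S A : Type) where
  le : W → W → Prop
  Is : W → Set S
  In : W → Set A
  rN : W → S → A → Prop
  rE : W → A → S → Prop
  IP : ℕ → W → Set S

/-- `F` is an IFOM-structure: the order is a partial order, the predicates are
typed by the sort interpretations, and all interpretations increase along ≤. -/
def IFOMStruct.IsIFOM (F : IFOMStruct W S A) : Prop :=
  IsPartialOrder W F.le ∧
  (∀ ⦃w w'⦄, F.le w w' → F.Is w ⊆ F.Is w') ∧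
  (∀ ⦃w w'⦄, F.le w w' → F.In w ⊆ F.In w') ∧
  (∀ ⦃w w'⦄, F.le w w' → ∀ x a, F.rN w x a → F.rN w' x a) ∧
  (∀ ⦃w w'⦄, F.le w w' → ∀ a x, F.rE w a x → F.rE w' a x) ∧
  (∀ i ⦃w w'⦄, F.le w w' → F.IP i w ⊆ F.IP i w') ∧
  (∀ w x a, F.rN w x a → x ∈ F.Is w ∧ a ∈ F.In w) ∧
  (∀ w a x, F.rE w a x → a ∈ F.In w ∧ x ∈ F.Is w) ∧
  (∀ i w, F.IP i w ⊆ F.Is w)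

/-- Interpretation of L-formulas at a pair (w, x) of an IFOM-structure. -/
def IFOMStruct.sat (F : IFOMStruct W S A) : Formula → W → S → Prop
  | .prop i, w, x  => x ∈ F.IP i w
  | .bot, _, _     => False
  | .and φ ψ, w, x => F.sat φ w x ∧ F.sat ψ w x
  | .or φ ψ, w, x  => F.sat φ w x ∨ F.sat ψ w x
  | .imp φ ψ, w, x => ∀ w', F.le w w' → F.sat φ w' x → F.sat ψ w' x
  | .box φ, w, x   => ∃ a, a ∈ F.In w ∧ F.rN w x a ∧
      ∀ w', F.le w w' → ∀ x', x' ∈ F.Is w' → F.rE w' a x' → F.sat φ w' x'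
  | .dia φ, w, x   => ∀ w', F.le w w' → ∀ a', a' ∈ F.In w' → F.rN w' x a' →
      ∃ y', y' ∈ F.Is w' ∧ F.rE w' a' y' ∧ F.sat φ w' y'

/-- Semantic consequence over the class of all IFOM-structures. -/
def IFOMConseq (Γ : Set Formula) (φ : Formula) : Prop :=
  ∀ (W S A : Type) (F : IFOMStruct W S A), F.IsIFOM →
    ∀ (w : W) (x : S), x ∈ F.Is w → (∀ ψ ∈ Γ, F.sat ψ w x) → F.sat φ w x

/-- The carrier W• of the induced intuitionistic neighbourhood model 𝔐•. -/
def IFOMStruct.BullW (F : IFOMStruct W S A) : Type := {p : W × S // p.2 ∈ F.Is p.1}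

/-- The intuitionistic neighbourhood a• induced by an element a of sort n. -/
def IFOMStruct.bullNbhd (F : IFOMStruct W S A) (a : A) : Nbhd F.BullW where
  dom := {p | a ∈ F.In p.1.1 ∧ F.rN p.1.1 p.1.2 a}
  val := fun p => {q | q.1.1 = p.1.1 ∧ F.rE p.1.1 a q.1.2}

/-- The intuitionistic neighbourhood model 𝔐• induced by an IFOM-structure 𝔐. -/
def IFOMStruct.bull (F : IFOMStruct W S A) : INStruct F.BullW where
  le := fun p q => F.le p.1.1 q.1.1 ∧ p.1.2 = q.1.2
  N := {b | ∃ w, ∃ a ∈ F.In w, b = F.bullNbhd a}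
  V := fun i => {p | p.1.2 ∈ F.IP i p.1.1}

end IMPaper
namespace IMPaper

/-! ### Auxiliary material for Statement 12 -/

section Heredity

variable {W : Type} {M : INStruct W}

lemma INStruct.sat_mono (hM : M.IsModel) :
    ∀ (φ : Formula) {w v : W}, M.le w v → M.sat φ w → M.sat φ v := by
  have htrans : ∀ {a b c : W}, M.le a b → M.le b c → M.le a c :=
    fun h1 h2 => hM.1.toIsPreorder.toIsTrans.trans _ _ _ h1 h2
  intro φ
  induction φ with
  | prop i => intro w v h hw; exact hM.2.2 i h hw
  | bot => intro w v h hw; exact hw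
  | and φ ψ ihφ ihψ => intro w v h hw; exact ⟨ihφ h hw.1, ihψ h hw.2⟩
  | or φ ψ ihφ ihψ =>
      intro w v h hw
      rcases hw with h1 | h1
      · exact Or.inl (ihφ h h1)
      · exact Or.inr (ihψ h h1)
  | imp φ ψ ihφ ihψ => intro w v h hw u hu hφ; exact hw u (htrans h hu) hφ
  | box φ ih =>
      rintro w v h ⟨a, haN, hdom, H⟩
      exact ⟨a, haN, hM.2.1 a haN h hdom, fun w' hw' => H w' (htrans h hw')⟩
  | dia φ ih => intro w v h hw w' hw' a haN hdom; exact hw w' (htrans h hw') a haN hdom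

end Heredity

section Bull

variable {W S A : Type} {F : IFOMStruct W S A}

lemma IFOMStruct.bull_isModel (hF : F.IsIFOM) : F.bull.IsModel := by
  obtain ⟨hPO, hIs, hIn, hrN, hrE, hIP, htyN, htyE, htyP⟩ := hF
  refine ⟨?_, ?_, ?_⟩
  · exact
      { refl := fun p => ⟨hPO.toIsPreorder.toRefl.refl _, rfl⟩
        trans := fun p q r h1 h2 =>
          ⟨hPO.toIsPreorder.toIsTrans.trans _ _ _ h1.1 h2.1, h1.2.trans h2.2⟩
        antisymm := fun p q h1 h2 =>
          Subtype.ext (Prod.ext (hPO.toAntisymm.antisymm _ _ h1.1 h2.1) h1.2) }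
  · rintro b ⟨w₀, a, ha, rfl⟩ p q hpq hp
    refine ⟨hIn hpq.1 hp.1, ?_⟩
    have := hrN hpq.1 _ _ hp.2
    rwa [hpq.2] at this
  · intro i p q hpq hp
    have := hIP i hpq.1 hp
    rwa [hpq.2] at this

lemma IFOMStruct.bull_sat (hF : F.IsIFOM) :
    ∀ (φ : Formula) (p : F.BullW), F.bull.sat φ p ↔ F.sat φ p.1.1 p.1.2 := by
  obtain ⟨hPO, hIs, hIn, hrN, hrE, hIP, htyN, htyE, htyP⟩ := hF
  intro φ
  induction φ with
  | prop i => intro p; exact Iff.rfl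
  | bot => intro p; exact Iff.rfl
  | and φ ψ ihφ ihψ => intro p; exact and_congr (ihφ p) (ihψ p)
  | or φ ψ ihφ ihψ => intro p; exact or_congr (ihφ p) (ihψ p)
  | imp φ ψ ihφ ihψ =>
      intro p
      constructor
      · intro h w' hw' hφ
        have := h ⟨(w', p.1.2), hIs hw' p.2⟩ ⟨hw', rfl⟩ ((ihφ _).2 hφ)
        exact (ihψ _).1 this
      · rintro h ⟨⟨qw, qx⟩, hqmem⟩ ⟨h1, h2⟩ hφ
        cases h2
        exact (ihψ _).2 (h qw h1 ((ihφ _).1 hφ))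
  | box φ ih =>
      intro p
      constructor
      · rintro ⟨b, ⟨w₀, a, ha, rfl⟩, hdom, H⟩
        refine ⟨a, hdom.1, hdom.2, ?_⟩
        intro w' hw' x' hx' hE
        have := H ⟨(w', p.1.2), hIs hw' p.2⟩ ⟨hw', rfl⟩ ⟨(w', x'), hx'⟩ ⟨rfl, hE⟩
        exact (ih _).1 this
      · rintro ⟨a, haIn, haN, H⟩
        refine ⟨F.bullNbhd a, ⟨p.1.1, a, haIn, rfl⟩, ⟨haIn, haN⟩, ?_⟩
        rintro p' hp' ⟨⟨qw, qx⟩, hqmem⟩ ⟨hq1, hq2⟩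
        simp only at hq1 hq2
        subst hq1
        exact (ih _).2 (H p'.1.1 hp'.1 qx hqmem hq2)
  | dia φ ih =>
      intro p
      constructor
      · intro h w' hw' a' haIn' hrN'
        obtain ⟨q, hqval, hqsat⟩ :=
          h ⟨(w', p.1.2), hIs hw' p.2⟩ ⟨hw', rfl⟩ (F.bullNbhd a') ⟨w', a', haIn', rfl⟩
            ⟨haIn', hrN'⟩
        obtain ⟨⟨qw, qx⟩, hqmem⟩ := q
        obtain ⟨hq1, hq2⟩ := hqval
        simp only at hq1 hq2
        subst hq1
        exact ⟨qx, hqmem, hq2, (ih _).1 hqsat⟩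
      · rintro h p' hp' b ⟨w₁, a₀, ha₀, rfl⟩ hdom
        have hrN2 : F.rN p'.1.1 p.1.2 a₀ := by
          have := hdom.2
          rwa [← hp'.2] at this
        obtain ⟨y', hy'Is, hE', hsat'⟩ := h p'.1.1 hp'.1 a₀ hdom.1 hrN2
        exact ⟨⟨(p'.1.1, y'), hy'Is⟩, ⟨rfl, hE'⟩, (ih _).2 hsat'⟩

end Bull

section Slot

open scoped Classical

variable {W : Type} (M : INStruct W)

/-- One neighbourhood-model step along the order. -/
noncomputable def stp (u u' : W) : W := if M.le u u' then u' else u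

/-- The current location of the point `x = (v, n)` at the history `t`:
fold all updates of slot `n` occurring from position `n` onwards onto `v`. -/
noncomputable def gval (t : List (ℕ × W)) (x : W × ℕ) : W :=
  ((t.drop x.2).filterMap fun e => if e.1 = x.2 then some e.2 else none).foldl (stp M) x.1

variable {M}

lemma le_stp (hM : M.IsModel) (u u' : W) : M.le u (stp M u u') := by
  unfold stp
  split_ifs with h
  · exact h
  · exact hM.1.toIsPreorder.toRefl.refl u

lemma le_foldl (hM : M.IsModel) : ∀ (l : List W) (u : W), M.le u (l.foldl (stp M) u) := by
  intro l
  induction l with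
  | nil => intro u; exact hM.1.toIsPreorder.toRefl.refl u
  | cons c l ih =>
      intro u
      exact hM.1.toIsPreorder.toIsTrans.trans _ _ _ (le_stp hM u c) (ih (stp M u c))

lemma gval_le (hM : M.IsModel) {t t' : List (ℕ × W)} (h : t <+: t') (x : W × ℕ) :
    M.le (gval M t x) (gval M t' x) := by
  obtain ⟨r, rfl⟩ := h
  unfold gval
  rw [List.drop_append, List.filterMap_append, List.foldl_append]
  exact le_foldl hM _ _

lemma gval_virgin {t : List (ℕ × W)} {x : W × ℕ} (h : t.length ≤ x.2) :
    gval M t x = x.1 := by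
  unfold gval
  rw [List.drop_eq_nil_of_le h]
  rfl

lemma gval_nil (x : W × ℕ) : gval M ([] : List (ℕ × W)) x = x.1 :=
  gval_virgin (Nat.zero_le _)

/-- Push the point `x` to the value `u` by appending a suitable update. -/
def pusht (t : List (ℕ × W)) (x : W × ℕ) (u : W) : List (ℕ × W) :=
  t ++ (List.replicate (x.2 - t.length) (x.2 + 1, u) ++ [(x.2, u)])

lemma pusht_prefix (t : List (ℕ × W)) (x : W × ℕ) (u : W) : t <+: pusht t x u :=
  ⟨_, rfl⟩

lemma pusht_drop (t : List (ℕ × W)) (x : W × ℕ) (u : W) :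
    (pusht t x u).drop x.2 = t.drop x.2 ++ [(x.2, u)] := by
  unfold pusht
  rw [List.drop_append, List.drop_append,
    List.drop_eq_nil_of_le
      (le_of_eq (List.length_replicate (n := x.2 - t.length) (a := ((x.2 + 1, u) : ℕ × W)))),
    List.length_replicate, Nat.sub_self, List.drop_zero, List.nil_append]

lemma gval_pusht (hM : M.IsModel) {t : List (ℕ × W)} {x : W × ℕ} {u : W}
    (h : M.le (gval M t x) u) : gval M (pusht t x u) x = u := by
  have hsel : List.filterMap (fun e => if e.1 = x.2 then some e.2 else none)
      [(x.2, u)] = [u] := by simp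
  unfold gval
  rw [pusht_drop, List.filterMap_append, hsel, List.foldl_append,
    List.foldl_cons, List.foldl_nil]
  show stp M (gval M t x) u = u
  unfold stp
  rw [if_pos h]

lemma take_eq_of_prefix {t t' : List (ℕ × W)} (h : t <+: t') {k : ℕ}
    (hk : k ≤ t.length) : t'.take k = t.take k := by
  obtain ⟨r, rfl⟩ := h
  rw [List.take_append, Nat.sub_eq_zero_of_le hk, List.take_zero,
    List.append_nil]

/-- The sort of "neighbourhood certificates" of the induced IFOM-structure. -/
abbrev SlotA (W : Type) : Type := (Nbhd W × W) ⊕ (Nbhd W × ((W × ℕ) × ℕ))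

/-- The IFOM-structure induced by an intuitionistic neighbourhood model. -/
noncomputable def slotF (M : INStruct W) :
    IFOMStruct (List (ℕ × W)) (W × ℕ) (SlotA W) where
  le t t' := t <+: t'
  Is _ := Set.univ
  In _ := Set.univ
  rN t x b :=
    match b with
    | Sum.inl (a, u) => a ∈ M.N ∧ u ∈ a.dom ∧ M.le u (gval M t x)
    | Sum.inr (a, xh, k) => a ∈ M.N ∧ xh = x ∧ gval M t x ∈ a.dom ∧ k ≤ t.length
  rE t b y :=
    match b with
    | Sum.inl (a, u) => a ∈ M.N ∧ ∃ u', M.le u u' ∧ ∃ v ∈ a.val u', M.le v (gval M t y)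
    | Sum.inr (a, xh, k) => a ∈ M.N ∧ ∃ k', k ≤ k' ∧ k' ≤ t.length ∧ k' ≤ y.2 ∧
        y.1 ∈ a.val (gval M (t.take k') xh)
  IP i t := {x | gval M t x ∈ M.V i}

lemma slotF_isIFOM (hM : M.IsModel) : (slotF M).IsIFOM := by
  have htrans : ∀ {a b c : W}, M.le a b → M.le b c → M.le a c :=
    fun h1 h2 => hM.1.toIsPreorder.toIsTrans.trans _ _ _ h1 h2
  refine ⟨?_, ?_, ?_, ?_, ?_, ?_, ?_, ?_, ?_⟩
  · exact
      { refl := fun t => List.prefix_refl t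
        trans := fun a b c h1 h2 => List.IsPrefix.trans h1 h2
        antisymm := fun a b h1 h2 =>
          List.Sublist.antisymm (List.IsPrefix.sublist h1) (List.IsPrefix.sublist h2) }
  · intro t t' h x hx; exact Set.mem_univ _
  · intro t t' h a ha; exact Set.mem_univ _
  · intro t t' h x b hb
    match b with
    | Sum.inl (a, u) =>
        obtain ⟨h1, h2, h3⟩ := hb
        exact ⟨h1, h2, htrans h3 (gval_le hM h x)⟩
    | Sum.inr (a, xh, k) =>
        obtain ⟨h1, h2, h3, h4⟩ := hb
        exact ⟨h1, h2, hM.2.1 a h1 (gval_le hM h x) h3, h4.trans h.length_le⟩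
  · intro t t' h b y hb
    match b with
    | Sum.inl (a, u) =>
        obtain ⟨h1, u', h2, v, h3, h4⟩ := hb
        exact ⟨h1, u', h2, v, h3, htrans h4 (gval_le hM h y)⟩
    | Sum.inr (a, xh, k) =>
        obtain ⟨h1, k', h2, h3, h4, h5⟩ := hb
        refine ⟨h1, k', h2, h3.trans h.length_le, h4, ?_⟩
        rwa [take_eq_of_prefix h h3]
  · intro i t t' h x hx
    exact hM.2.2 i (gval_le hM h x) hx
  · intro t x b _; exact ⟨Set.mem_univ _, Set.mem_univ _⟩
  · intro t b y _; exact ⟨Set.mem_univ _, Set.mem_univ _⟩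
  · intro i t x _; exact Set.mem_univ _

lemma slot_TL (hM : M.IsModel) :
    ∀ (φ : Formula) (t : List (ℕ × W)) (x : W × ℕ),
      (slotF M).sat φ t x ↔ M.sat φ (gval M t x) := by
  have hrefl : ∀ w : W, M.le w w := fun w => hM.1.toIsPreorder.toRefl.refl w
  have htrans : ∀ {a b c : W}, M.le a b → M.le b c → M.le a c :=
    fun h1 h2 => hM.1.toIsPreorder.toIsTrans.trans _ _ _ h1 h2
  intro φ
  induction φ with
  | prop i => intro t x; exact Iff.rfl
  | bot => intro t x; exact Iff.rfl
  | and φ ψ ihφ ihψ => intro t x; exact and_congr (ihφ t x) (ihψ t x)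
  | or φ ψ ihφ ihψ => intro t x; exact or_congr (ihφ t x) (ihψ t x)
  | imp φ ψ ihφ ihψ =>
      intro t x
      constructor
      · intro h v hv hφ
        have h1 := h (pusht t x v) (pusht_prefix t x v)
          ((ihφ _ _).2 (by rwa [gval_pusht hM hv]))
        have h2 := (ihψ _ _).1 h1
        rwa [gval_pusht hM hv] at h2
      · intro h t' ht' hφ
        exact (ihψ _ _).2 (h _ (gval_le hM ht' x) ((ihφ _ _).1 hφ))
  | box φ ih =>
      intro t x
      constructor
      · rintro ⟨b, -, hrN, H⟩
        match b with
        | Sum.inl (a, u0) =>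
            obtain ⟨haN, hdom, hle⟩ := hrN
            refine ⟨a, haN, hM.2.1 a haN hle hdom, ?_⟩
            intro u' hu' v hv
            have hrE : (slotF M).rE t (Sum.inl (a, u0)) (v, t.length) :=
              ⟨haN, u', htrans hle hu', v, hv, by
                rw [gval_virgin (le_refl t.length)]; exact hrefl v⟩
            have hs := H t (List.prefix_refl t) (v, t.length) (Set.mem_univ _) hrE
            have hss := (ih t _).1 hs
            rwa [gval_virgin (le_refl t.length)] at hss
        | Sum.inr (a, xh, k) =>
            obtain ⟨haN, hxe, hdom, hk⟩ := hrN
            subst hxe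
            refine ⟨a, haN, hdom, ?_⟩
            intro u' hu' v hv
            have hg : gval M (pusht t xh u') xh = u' := gval_pusht hM hu'
            have hrE : (slotF M).rE (pusht t xh u') (Sum.inr (a, xh, k))
                (v, (pusht t xh u').length) :=
              ⟨haN, (pusht t xh u').length,
                hk.trans (pusht_prefix t xh u').length_le, le_refl _,
                le_refl _, by rw [List.take_length, hg]; exact hv⟩
            have hs := H (pusht t xh u') (pusht_prefix t xh u')
              (v, (pusht t xh u').length) (Set.mem_univ _) hrE
            have hss := (ih _ _).1 hs
            rwa [gval_virgin (le_refl (pusht t xh u').length)] at hss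
      · rintro ⟨a, haN, hdom, H⟩
        refine ⟨Sum.inl (a, gval M t x), Set.mem_univ _, ⟨haN, hdom, hrefl _⟩, ?_⟩
        rintro t' ht' y - ⟨-, u', hu', v, hv, hvle⟩
        exact (ih _ _).2 (INStruct.sat_mono hM φ hvle (H u' hu' v hv))
  | dia φ ih =>
      intro t x
      constructor
      · intro h u' hu' a haN hdom
        have hg : gval M (pusht t x u') x = u' := gval_pusht hM hu'
        obtain ⟨y, -, hrE, hsat⟩ :=
          h (pusht t x u') (pusht_prefix t x u')
            (Sum.inr (a, x, (pusht t x u').length)) (Set.mem_univ _)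
            ⟨haN, rfl, by rw [hg]; exact hdom, le_refl _⟩
        obtain ⟨-, k', hk1, hk2, hk3, hy⟩ := hrE
        have hkeq : k' = (pusht t x u').length := le_antisymm hk2 hk1
        rw [hkeq, List.take_length, hg] at hy
        have hnew := (ih _ _).1 hsat
        rw [gval_virgin (hkeq ▸ hk3)] at hnew
        exact ⟨y.1, hy, hnew⟩
      · intro h t' ht' b hbIn hrN
        match b with
        | Sum.inl (a, u0) =>
            obtain ⟨haN, hdom, hle⟩ := hrN
            obtain ⟨v, hv, hsat⟩ :=
              h (gval M t' x) (gval_le hM ht' x) a haN (hM.2.1 a haN hle hdom)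
            refine ⟨(v, t'.length), Set.mem_univ _,
              ⟨haN, gval M t' x, hle, v, hv, ?_⟩, ?_⟩
            · rw [gval_virgin (le_refl t'.length)]; exact hrefl v
            · exact (ih _ _).2 (by rw [gval_virgin (le_refl t'.length)]; exact hsat)
        | Sum.inr (a, xh, k) =>
            obtain ⟨haN, hxe, hdom, hk⟩ := hrN
            subst hxe
            obtain ⟨v, hv, hsat⟩ := h (gval M t' xh) (gval_le hM ht' xh) a haN hdom
            refine ⟨(v, t'.length), Set.mem_univ _,
              ⟨haN, t'.length, hk, le_refl _, le_refl _, ?_⟩, ?_⟩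
            · rw [List.take_length]; exact hv
            · exact (ih _ _).2 (by rw [gval_virgin (le_refl t'.length)]; exact hsat)

end Slot


/-- semantic consequence over intuitionistic neighbourhood models
coincides with semantic consequence over IFOM-structures. -/
theorem inm_iff_ifom (Γ : Set Formula) (φ : Formula) :
    INConseq Γ φ ↔ IFOMConseq Γ φ := by
  constructor
  · intro h W S A F hF w x hx hΓ
    have hTL := IFOMStruct.bull_sat (F := F) hF
    exact (hTL φ ⟨(w, x), hx⟩).1
      (h F.BullW F.bull (IFOMStruct.bull_isModel hF) ⟨(w, x), hx⟩
        (fun ψ hψ => (hTL ψ ⟨(w, x), hx⟩).2 (hΓ ψ hψ)))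
  · intro h W M hM w hΓ
    have hTL := slot_TL (M := M) hM
    have h0 : gval M ([] : List (ℕ × W)) (w, 0) = w := gval_nil _
    have hmain := h (List (ℕ × W)) (W × ℕ) (SlotA W) (slotF M) (slotF_isIFOM hM)
      ([] : List (ℕ × W)) (w, 0) (Set.mem_univ _)
      (fun ψ hψ => (hTL ψ [] (w, 0)).2 (by rw [h0]; exact hΓ ψ hψ))
    have hfin := (hTL φ [] (w, 0)).1 hmain
    rwa [h0] at hfin

end IMPaper
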